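/- With the polynomials P₂, Q₄, R₃ defined in the context, the polynomial identity K² = −4φ₆³ + φ₆²·P₂(w,w') + φ₆·Q₄(w,w') + R₃(w,w')² holds in the polynomial ring over ℚ in the fourteen coefficients and y₁,y₂,y₃ (with w = w(y), w' = w'(y)). -/
import Mathlib


open MvPolynomial

noncomputable section

/-- The polynomial ring ℚ[a₁,a₂,b₁,b₂,b₃,c₁,c₂,a₁',a₂',b₁',b₂',b₃',c₁',c₂',y₁,y₂,y₃]. -/
abbrev R17 : Type := MvPolynomial (Fin 17) ℚ

def a1 : R17 := X 0
def a2 : R17 := X 1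
def b1 : R17 := X 2
def b2 : R17 := X 3
def b3 : R17 := X 4
def c1 : R17 := X 5
def c2 : R17 := X 6
def a1' : R17 := X 7
def a2' : R17 := X 8
def b1' : R17 := X 9
def b2' : R17 := X 10
def b3' : R17 := X 11
def c1' : R17 := X 12
def c2' : R17 := X 13
def y1 : R17 := X 14
def y2 : R17 := X 15
def y3 : R17 := X 16

/-- w evaluated at y. -/
def w : R17 :=
  y3^2*(a1*y1 + a2*y2) + y3*(b1*y1^2 + b2*y1*y2 + b3*y2^2) + c1*y1^2*y2 + c2*y1*y2^2
/-- w' evaluated at y. -/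
def w' : R17 :=
  y3^2*(a1'*y1 + a2'*y2) + y3*(b1'*y1^2 + b2'*y1*y2 + b3'*y2^2) + c1'*y1^2*y2 + c2'*y1*y2^2

def A1 : R17 := a1*w' - a1'*w
def A2 : R17 := a2*w' - a2'*w
def B1 : R17 := b1*w' - b1'*w
def B2 : R17 := b2*w' - b2'*w
def B3 : R17 := b3*w' - b3'*w
def C1 : R17 := c1*w' - c1'*w
def C2 : R17 := c2*w' - c2'*w

def r1' : R17 := B1*A2^2 - B2*A1*A2 + B3*A1^2
def r3' : R17 := A2*C1 - A1*C2
def r1 : R17 := A2*r1'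
def r2 : R17 := -(A1*r1')
def r3 : R17 := A1*A2*r3'
def γ4 : R17 := y1*A1 + y2*A2
def κ : R17 := a1*b1' - a1'*b1

/-- C₅, in terms of the three exact quotients q₁ = (B₁+κy₁y₃²)/y₂,
q₂ = (A₁−κy₁²y₃)/y₂, q₃ = (A₂y₃+B₃y₂)/y₁. -/
def C5 (q1 q2 q3 : R17) : R17 := A2*q1 + q2*q3 + κ*B3*y1*y3
def φ6 (q1 q2 q3 : R17) : R17 := A1*C2 + y3 * C5 q1 q2 q3
def ψ6 (q1 q2 q3 : R17) : R17 := A2*C1 + y3 * C5 q1 q2 q3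

/-- P₂(t,t') = Σ pᵢtⁱt'^{2−i} with pᵢ = (−1)ⁱ{p₀}ᵢ, p₀ = b₂²−4a₂c₁−4b₁b₃+8a₁c₂.
Since Σᵢ {e}ᵢ xⁱ is e with every coefficient v replaced by v + x·v', this equals
p₀ with every coefficient v replaced by t'·v − t·v'. -/
def P2 (t t' : R17) : R17 :=
  (t'*b2 - t*b2')^2 - 4*(t'*a2 - t*a2')*(t'*c1 - t*c1')
    - 4*(t'*b1 - t*b1')*(t'*b3 - t*b3') + 8*(t'*a1 - t*a1')*(t'*c2 - t*c2')

/-- R₃(t,t') = Σ rᵢtⁱt'^{3−i} with rᵢ = (−1)ⁱ{r₀}ᵢ,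
r₀ = −a₁b₂c₂ + a₁b₃c₁ + a₂b₁c₂; each coefficient v replaced by t'·v − t·v'. -/
def R3 (t t' : R17) : R17 :=
  -((t'*a1 - t*a1')*(t'*b2 - t*b2')*(t'*c2 - t*c2'))
    + (t'*a1 - t*a1')*(t'*b3 - t*b3')*(t'*c1 - t*c1')
    + (t'*a2 - t*a2')*(t'*b1 - t*b1')*(t'*c2 - t*c2')

/-- Q₄(t,t') = Σ qᵢtⁱt'^{4−i} with qᵢ = (−1)ⁱ{q₀}ᵢ,
q₀ = 4(a₁c₂ − b₁b₃)(a₂c₁ − a₁c₂) + 2b₂r₀. -/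
def Q4 (t t' : R17) : R17 :=
  4*((t'*a1 - t*a1')*(t'*c2 - t*c2') - (t'*b1 - t*b1')*(t'*b3 - t*b3'))
      * ((t'*a2 - t*a2')*(t'*c1 - t*c1') - (t'*a1 - t*a1')*(t'*c2 - t*c2'))
    + 2*(t'*b2 - t*b2') * R3 t t'


set_option maxHeartbeats 2000000 in
/-- Abstract key identity with denominators cleared. -/
private lemma key {S : Type*} [CommRing S] (a b c d e f g k u v t : S)
    (hs : t^2*(a*u + b*v) + t*(c*u^2 + d*u*v + e*v^2) + f*u^2*v + g*u*v^2 = 0) :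
    (u*(u*v*b*f + t*(b*u*(c + k*u*t^2) + (a - k*u^2*t)*(b*t + e*v) + k*e*u^2*v*t))*(a*t + c*u)
      - v*(u*v*a*g + t*(b*u*(c + k*u*t^2) + (a - k*u^2*t)*(b*t + e*v) + k*e*u^2*v*t))*(b*t + e*v))^2
    = -4*(u*v*a*g + t*(b*u*(c + k*u*t^2) + (a - k*u^2*t)*(b*t + e*v) + k*e*u^2*v*t))^3*(u*v)
      + (u*v*a*g + t*(b*u*(c + k*u*t^2) + (a - k*u^2*t)*(b*t + e*v) + k*e*u^2*v*t))^2*(u*v)^2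
          *(d^2 - 4*b*f - 4*c*e + 8*a*g)
      + (u*v*a*g + t*(b*u*(c + k*u*t^2) + (a - k*u^2*t)*(b*t + e*v) + k*e*u^2*v*t))*(u*v)^3
          *(4*(a*g - c*e)*(b*f - a*g) + 2*d*(-(a*d*g) + a*e*f + b*c*g))
      + (u*v)^4*(-(a*d*g) + a*e*f + b*c*g)^2 := by
  linear_combination ((-1)*b^2*c^2*g*u^3*v^2 + (1)*b^2*c^2*f*u^4*v + (1)*b^2*c^2*e*u^2*v^2*t + (-1)*b^2*c^2*d*u^3*v*t + (1)*b^2*c^3*u^4*t + (1)*b^3*c^2*u^2*v*t^2 + (2)*a*b*c*e^2*u*v^3*t + (-2)*a*b*c*d*e*u^2*v^2*t + (2)*a*b*c^2*e*u^3*v*t + (2)*a*b^2*c*f*u^3*v*t + (4)*a*b^2*c*e*u*v^2*t^2 + (-2)*a*b^2*c*d*u^2*v*t^2 + (3)*a*b^2*c^2*u^3*t^2 + (2)*a*b^3*c*u*v*t^3 + (1)*a^2*e^2*g*u*v^4 + (-1)*a^2*e^2*f*u^2*v^3 + (1)*a^2*e^3*v^4*t + (-1)*a^2*d*e^2*u*v^3*t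 + (1)*a^2*c*e^2*u^2*v^2*t + (2)*a^2*b*e*g*u*v^3*t + (3)*a^2*b*e^2*v^3*t^2 + (-2)*a^2*b*d*e*u*v^2*t^2 + (4)*a^2*b*c*e*u^2*v*t^2 + (1)*a^2*b^2*g*u*v^2*t^2 + (1)*a^2*b^2*f*u^2*v*t^2 + (3)*a^2*b^2*e*v^2*t^3 + (-1)*a^2*b^2*d*u*v*t^3 + (3)*a^2*b^2*c*u^2*t^3 + (1)*a^2*b^3*v*t^4 + (1)*a^3*e^2*u*v^2*t^2 + (2)*a^3*b*e*u*v*t^3 + (1)*a^3*b^2*u*t^4) * hs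

set_option maxHeartbeats 4000000 in
/-- The identity K² = −4φ₆³ + φ₆²P₂(w,w') + φ₆Q₄(w,w') + R₃(w,w')². -/
theorem stmt8 (q1 q2 q3 qK K : R17)
    (h1 : y2 * q1 = B1 + κ*y1*y3^2)
    (h2 : y2 * q2 = A1 - κ*y1^2*y3)
    (h3 : y1 * q3 = A2*y3 + B3*y2)
    (hqK : y2 * qK = A1*y3 + B1*y1)
    (hK : K = ψ6 q1 q2 q3 * qK - φ6 q1 q2 q3 * q3) :
    K^2 = -4 * (φ6 q1 q2 q3)^3 + (φ6 q1 q2 q3)^2 * P2 w w'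
      + φ6 q1 q2 q3 * Q4 w w' + (R3 w w')^2 := by
  have hS : y1*y2*C5 q1 q2 q3 = (A2*y1*(B1 + κ*y1*y3^2) + (A1 - κ*y1^2*y3)*(A2*y3 + B3*y2) + κ*B3*y1^2*y2*y3) := by
    unfold C5
    linear_combination (A2*y1)*h1 + (y1*q3)*h2 + (A1 - κ*y1^2*y3)*h3
  have hphi : y1*y2*φ6 q1 q2 q3 = (y1*y2*A1*C2 + y3*(A2*y1*(B1 + κ*y1*y3^2) + (A1 - κ*y1^2*y3)*(A2*y3 + B3*y2) + κ*B3*y1^2*y2*y3)) := by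
    unfold φ6
    linear_combination y3*hS
  have hpsi : y1*y2*ψ6 q1 q2 q3 = (y1*y2*A2*C1 + y3*(A2*y1*(B1 + κ*y1*y3^2) + (A1 - κ*y1^2*y3)*(A2*y3 + B3*y2) + κ*B3*y1^2*y2*y3)) := by
    unfold ψ6
    linear_combination y3*hS
  have hKK : y1^2*y2^2*K
      = y1*(y1*y2*A2*C1 + y3*(A2*y1*(B1 + κ*y1*y3^2) + (A1 - κ*y1^2*y3)*(A2*y3 + B3*y2) + κ*B3*y1^2*y2*y3))*(A1*y3 + B1*y1) - y2*(y1*y2*A1*C2 + y3*(A2*y1*(B1 + κ*y1*y3^2) + (A1 - κ*y1^2*y3)*(A2*y3 + B3*y2) + κ*B3*y1^2*y2*y3))*(A2*y3 + B3*y2) := by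
    linear_combination (y1^2*y2^2)*hK + (y1*y2*qK)*hpsi + (y1*(y1*y2*A2*C1 + y3*(A2*y1*(B1 + κ*y1*y3^2) + (A1 - κ*y1^2*y3)*(A2*y3 + B3*y2) + κ*B3*y1^2*y2*y3)))*hqK
      - (y1*y2*q3)*hphi - (y2*(y1*y2*A1*C2 + y3*(A2*y1*(B1 + κ*y1*y3^2) + (A1 - κ*y1^2*y3)*(A2*y3 + B3*y2) + κ*B3*y1^2*y2*y3)))*h3
  have hstar : y3^2*(A1*y1 + A2*y2) + y3*(B1*y1^2 + B2*y1*y2 + B3*y2^2)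
      + C1*y1^2*y2 + C2*y1*y2^2 = 0 := by
    unfold A1 A2 B1 B2 B3 C1 C2 w w'
    ring
  have hkey := key A1 A2 B1 B2 B3 C1 C2 κ y1 y2 y3 hstar
  have hP : P2 w w' = (B2^2 - 4*A2*C1 - 4*B1*B3 + 8*A1*C2) := by
    unfold P2 A1 A2 B1 B2 B3 C1 C2; ring
  have hR : R3 w w' = -(A1*B2*C2) + A1*B3*C1 + A2*B1*C2 := by
    unfold R3 A1 A2 B1 B2 B3 C1 C2; ring
  have hQ : Q4 w w' = (4*(A1*C2 - B1*B3)*(A2*C1 - A1*C2) + 2*B2*(-(A1*B2*C2) + A1*B3*C1 + A2*B1*C2)) := by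
    unfold Q4 R3 A1 A2 B1 B2 B3 C1 C2; ring
  have hy : (y1*y2 : R17) ≠ 0 := by
    have h14 : (X 14 : R17) ≠ 0 := MvPolynomial.X_ne_zero _
    have h15 : (X 15 : R17) ≠ 0 := MvPolynomial.X_ne_zero _
    exact mul_ne_zero h14 h15
  have hc : ((y1*y2)^4 : R17) ≠ 0 := pow_ne_zero _ hy
  apply mul_left_cancel₀ hc
  calc (y1*y2)^4 * K^2 = (y1^2*y2^2*K)^2 := by ring
    _ = (y1*(y1*y2*A2*C1 + y3*(A2*y1*(B1 + κ*y1*y3^2) + (A1 - κ*y1^2*y3)*(A2*y3 + B3*y2) + κ*B3*y1^2*y2*y3))*(A1*y3 + B1*y1) - y2*(y1*y2*A1*C2 + y3*(A2*y1*(B1 + κ*y1*y3^2) + (A1 - κ*y1^2*y3)*(A2*y3 + B3*y2) + κ*B3*y1^2*y2*y3))*(A2*y3 + B3*y2))^2 := by rw [hKK]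
    _ = (y1*y2)^4 * (-4 * (φ6 q1 q2 q3)^3 + (φ6 q1 q2 q3)^2 * P2 w w'
          + φ6 q1 q2 q3 * Q4 w w' + (R3 w w')^2) := by
      rw [hP, hQ, hR]
      linear_combination hkey
        + (4*(y1*y2)*((y1*y2*φ6 q1 q2 q3)^2 + (y1*y2*φ6 q1 q2 q3)*(y1*y2*A1*C2 + y3*(A2*y1*(B1 + κ*y1*y3^2) + (A1 - κ*y1^2*y3)*(A2*y3 + B3*y2) + κ*B3*y1^2*y2*y3)) + (y1*y2*A1*C2 + y3*(A2*y1*(B1 + κ*y1*y3^2) + (A1 - κ*y1^2*y3)*(A2*y3 + B3*y2) + κ*B3*y1^2*y2*y3))^2)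
            - (y1*y2)^2*(B2^2 - 4*A2*C1 - 4*B1*B3 + 8*A1*C2)*((y1*y2*φ6 q1 q2 q3) + (y1*y2*A1*C2 + y3*(A2*y1*(B1 + κ*y1*y3^2) + (A1 - κ*y1^2*y3)*(A2*y3 + B3*y2) + κ*B3*y1^2*y2*y3)))
            - (y1*y2)^3*(4*(A1*C2 - B1*B3)*(A2*C1 - A1*C2) + 2*B2*(-(A1*B2*C2) + A1*B3*C1 + A2*B1*C2))) * hphi
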